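/- In any solution of the peg puzzle, every pair consisting of one red peg and one blue peg crosses (one jumps over the other) an odd number of times; in particular, each such pair crosses at least once. -/

import Mathlib

open scoped Classical

/-- A peg of the puzzle: `Sum.inl i` is the `i`-th blue peg, `Sum.inr i` is
the `i`-th red peg. -/
abbrev Peg (N : ℕ) := Fin N ⊕ Fin N

/-- A solution of the `N`-peg puzzle using `L` moves, recorded by the
position (a hole, numbered `1,…,2N+1`) of each peg at each time `0,…,L`.
Initially the blue pegs occupy holes `1,…,N` and the red pegs holes
`N+2,…,2N+1`; at the end the red pegs occupy the leftmost `N` holes and the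
blue pegs the rightmost `N` holes.  On each move exactly one peg moves, by
`±1` into the adjacent empty hole (a step), or by `±2` over one adjacent peg
into the empty hole (a jump). -/
structure PegSolution (N L : ℕ) where
  pos : ℕ → Peg N → ℤ
  mem_range : ∀ t ≤ L, ∀ p, 1 ≤ pos t p ∧ pos t p ≤ 2 * N + 1
  inj : ∀ t ≤ L, ∀ p q, pos t p = pos t q → p = q
  init_blue : ∀ i : Fin N, pos 0 (Sum.inl i) = (i : ℤ) + 1
  init_red : ∀ i : Fin N, pos 0 (Sum.inr i) = (N : ℤ) + 2 + (i : ℤ)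
  final_blue : ∀ i : Fin N, (N : ℤ) + 2 ≤ pos L (Sum.inl i)
  final_red : ∀ i : Fin N, pos L (Sum.inr i) ≤ (N : ℤ)
  move : ∀ t < L, ∃ mover : Peg N,
    (∀ q, q ≠ mover → pos (t + 1) q = pos t q) ∧
    ((pos (t + 1) mover - pos t mover = 1 ∨ pos (t + 1) mover - pos t mover = -1) ∨
     ((pos (t + 1) mover - pos t mover = 2 ∨ pos (t + 1) mover - pos t mover = -2) ∧
      ∃ mid : Peg N, mid ≠ mover ∧ 2 * pos t mid = pos t mover + pos (t + 1) mover))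

/-- The pair consisting of the blue peg `i` and the red peg `j` crosses on
move `t` (one jumps over the other): their relative order changes between
times `t` and `t + 1`. -/
def CrossesAt {N L : ℕ} (s : PegSolution N L) (i j : Fin N) (t : ℕ) : Prop :=
  (s.pos t (Sum.inl i) - s.pos t (Sum.inr j)) *
    (s.pos (t + 1) (Sum.inl i) - s.pos (t + 1) (Sum.inr j)) < 0

/-- The weight of the position at time `t`: total distance moved right by the
blue pegs plus total distance moved left by the red pegs. -/
def weight {N L : ℕ} (s : PegSolution N L) (t : ℕ) : ℤ :=
  (∑ i : Fin N, (s.pos t (Sum.inl i) - s.pos 0 (Sum.inl i))) +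
  ∑ i : Fin N, (s.pos 0 (Sum.inr i) - s.pos t (Sum.inr i))

/-- Move `t` is a first cross: some red–blue pair crosses on move `t` for the
first time. -/
def IsFirstCross {N L : ℕ} (s : PegSolution N L) (t : ℕ) : Prop :=
  ∃ i j : Fin N, CrossesAt s i j t ∧ ∀ u < t, ¬ CrossesAt s i j u

/-- In any solution of the peg puzzle, every pair consisting of one red peg
and one blue peg crosses an odd number of times; in particular, each such
pair crosses at least once. -/
theorem pair_crosses_odd (N L : ℕ) (s : PegSolution N L) (i j : Fin N) :
    Odd ((Finset.range L).filter (fun t => CrossesAt s i j t)).card ∧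
    1 ≤ ((Finset.range L).filter (fun t => CrossesAt s i j t)).card := by
  have hne : ∀ t ≤ L, s.pos t (Sum.inl i) - s.pos t (Sum.inr j) ≠ 0 := by
    intro t ht h
    have := s.inj t ht (Sum.inl i) (Sum.inr j) (by linarith)
    simp at this
  have key : ∀ (M : ℕ) (f : ℕ → ℤ), (∀ t ≤ M, f t ≠ 0) →
      (Even ((Finset.range M).filter (fun t => f t * f (t + 1) < 0)).card ↔
        0 < f 0 * f M) := by
    intro M
    induction M with
    | zero =>
      intro f h
      simp [mul_self_pos.mpr (h 0 le_rfl)]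
    | succ M ih =>
      intro f h
      rw [Finset.range_add_one, Finset.filter_insert]
      have ihs := ih f (fun t ht => h t (by omega))
      have h0 := (h 0 (by omega)).lt_or_gt
      have hM := (h M (by omega)).lt_or_gt
      have hM1 := (h (M + 1) le_rfl).lt_or_gt
      by_cases hc : f M * f (M + 1) < 0
      · rw [if_pos hc, Finset.card_insert_of_notMem (by simp)]
        rw [Nat.even_add_one, ihs]
        constructor
        · intro hn
          rcases h0 with h0 | h0 <;> rcases hM with hM | hM <;>
            rcases hM1 with hM1 | hM1 <;> nlinarith
        · intro hp hn
          rcases h0 with h0 | h0 <;> rcases hM with hM | hM <;>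
            rcases hM1 with hM1 | hM1 <;> nlinarith
      · rw [if_neg hc, ihs]
        constructor
        · intro hn
          rcases h0 with h0 | h0 <;> rcases hM with hM | hM <;>
            rcases hM1 with hM1 | hM1 <;> nlinarith
        · intro hp
          rcases h0 with h0 | h0 <;> rcases hM with hM | hM <;>
            rcases hM1 with hM1 | hM1 <;> nlinarith
  have hi : (i : ℤ) < N := by exact_mod_cast i.isLt
  have hj : (0 : ℤ) ≤ (j : ℤ) := by positivity
  have h0 : s.pos 0 (Sum.inl i) - s.pos 0 (Sum.inr j) < 0 := by
    have := s.init_blue i; have := s.init_red j; linarith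
  have hL : 0 < s.pos L (Sum.inl i) - s.pos L (Sum.inr j) := by
    have := s.final_blue i; have := s.final_red j; linarith
  have hOdd : Odd ((Finset.range L).filter (fun t => CrossesAt s i j t)).card := by
    rw [← Nat.not_even_iff_odd]
    have := key L (fun t => s.pos t (Sum.inl i) - s.pos t (Sum.inr j)) hne
    beta_reduce at this
    intro hp
    have hEq : (Finset.range L).filter (fun t => CrossesAt s i j t) =
        (Finset.range L).filter (fun t =>
          (s.pos t (Sum.inl i) - s.pos t (Sum.inr j)) *
            (s.pos (t + 1) (Sum.inl i) - s.pos (t + 1) (Sum.inr j)) < 0) := by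
      ext x
      rw [Finset.mem_filter, Finset.mem_filter]; rfl
    rw [hEq] at hp
    have hp2 := this.mp hp
    nlinarith
  exact ⟨hOdd, hOdd.pos⟩
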